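/- If 0 ≤ p* < 1, 0 < p_w < 1, 0 ≤ a* ≤ p_w, and b* ≥ (1−p*)(1−p_w)/p* + 1 with p* > 0, then (1−p_w)·p*·b* + p_w ≥ 3·(1−p*)(1−p_w)·a*; equivalently g ≥ 3h where g = (1−p_w)p*b* + p_w and h = (1−p*)(1−p_w)a*. -/
import Mathlib

theorem stmt19 (ps pw as bs : ℝ)
    (hps0 : 0 < ps) (hps1 : ps < 1) (hpw0 : 0 < pw) (hpw1 : pw < 1)
    (has0 : 0 ≤ as) (has : as ≤ pw)
    (hbs : (1 - ps) * (1 - pw) / ps + 1 ≤ bs) :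
    3 * ((1 - ps) * (1 - pw) * as) ≤ (1 - pw) * ps * bs + pw := by
  have hps' : ps ≠ 0 := ne_of_gt hps0
  have hb : (1 - ps) * (1 - pw) + ps ≤ ps * bs := by
    rw [div_add' _ _ _ hps', div_le_iff₀ hps0] at hbs
    nlinarith [hbs]
  nlinarith [mul_pos hpw0 (sub_pos.2 hpw1), sq_nonneg (1 - 2*pw),
    mul_nonneg (sub_nonneg.2 hps1.le) (sub_nonneg.2 hpw1.le),
    mul_le_mul_of_nonneg_left has (mul_nonneg (sub_nonneg.2 hps1.le) (sub_nonneg.2 hpw1.le)),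
    mul_le_mul_of_nonneg_left hb (sub_nonneg.2 hpw1.le),
    mul_nonneg (mul_nonneg hps0.le hpw0.le) (sub_nonneg.2 hpw1.le),
    sq_nonneg (pw*(1-pw))]
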